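/- Let Ξ ⊆ ℝ^d be compact, ℙ, ℚ probability measures on Ξ, and suppose the Kantorovich distance ρ(ℙ,ℚ) = sup_{g 1-Lipschitz} |E_ℙ[g] − E_ℚ[g]| ≤ δ. Let G : Ξ → ℝ be Lipschitz with constant κ_G and suppose ℙ∘G⁻¹ has density on ℝ bounded by C. Then |ℙ(G ≤ 0) − ℚ(G ≤ 0)| ≤ √(2·κ_G·C·δ). -/

import Mathlib

open MeasureTheory Set

/-- The Kantorovich (dual Wasserstein-1) metric: supremum over 1-Lipschitz test
functions of the difference of expectations. -/
noncomputable def kantorovich {X : Type*} [MeasurableSpace X] [MetricSpace X]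
    (P Q : Measure X) : ℝ :=
  sSup {r | ∃ g : X → ℝ, LipschitzWith 1 g ∧ r = |∫ x, g x ∂P - ∫ x, g x ∂Q|}

/-! ### Auxiliary piecewise-linear smoothing function -/

noncomputable def hfunCC (ε t y : ℝ) : ℝ := max 0 (min 1 ((t - y) / ε))

lemma hfunCC_nonneg (ε t y : ℝ) : 0 ≤ hfunCC ε t y := le_max_left _ _

lemma hfunCC_le_one (ε t y : ℝ) : hfunCC ε t y ≤ 1 := max_le zero_le_one (min_le_left _ _)

lemma hfunCC_eq_one {ε t y : ℝ} (hε : 0 < ε) (h : y ≤ t - ε) : hfunCC ε t y = 1 := by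
  have h1 : (1:ℝ) ≤ (t - y) / ε := (le_div_iff₀ hε).mpr (by linarith)
  simp [hfunCC, min_eq_left h1]

lemma hfunCC_eq_zero {ε t y : ℝ} (hε : 0 < ε) (h : t ≤ y) : hfunCC ε t y = 0 := by
  have h1 : (t - y) / ε ≤ 0 := div_nonpos_of_nonpos_of_nonneg (by linarith) hε.le
  have h2 : min 1 ((t - y) / ε) = (t - y)/ε := min_eq_right (h1.trans zero_le_one)
  simp [hfunCC, h2, max_eq_left h1]

lemma hfunCC_eq_mid {ε t y : ℝ} (hε : 0 < ε) (h1 : t - ε ≤ y) (h2 : y ≤ t) :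
    hfunCC ε t y = (t - y) / ε := by
  have ha : (t - y) / ε ≤ 1 := (div_le_one hε).mpr (by linarith)
  have hb : 0 ≤ (t - y) / ε := div_nonneg (by linarith) hε.le
  simp [hfunCC, min_eq_right ha, max_eq_right hb]

lemma hfunCC_lip {ε : ℝ} (hε : 0 < ε) (t y z : ℝ) :
    |hfunCC ε t y - hfunCC ε t z| ≤ (1/ε) * |y - z| := by
  unfold hfunCC
  calc |max 0 (min 1 ((t - y) / ε)) - max 0 (min 1 ((t - z) / ε))|
      = |max (min 1 ((t - y) / ε)) 0 - max (min 1 ((t - z) / ε)) 0| := by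
        rw [max_comm, max_comm (min 1 ((t - z) / ε))]
    _ ≤ |min 1 ((t - y) / ε) - min 1 ((t - z) / ε)| := abs_max_sub_max_le_abs _ _ _
    _ ≤ max |(1:ℝ) - 1| |(t - y) / ε - (t - z) / ε| := abs_min_sub_min_le_max _ _ _ _
    _ = |(t - y) / ε - (t - z) / ε| := by simp
    _ = (1/ε) * |y - z| := by
        rw [div_sub_div_same, abs_div, abs_of_pos hε]
        rw [show t - y - (t - z) = -(y - z) by ring, abs_neg]
        ring

lemma hfunCC_continuous (ε t : ℝ) : Continuous (hfunCC ε t) := by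
  unfold hfunCC
  exact continuous_const.max
    (continuous_const.min ((continuous_const.sub continuous_id).div_const ε))

lemma hfunCC_decomp_up {ε : ℝ} (hε : 0 < ε) (t y : ℝ) :
    hfunCC ε t y = indicator (Iic (t-ε)) 1 y
      + indicator (Ioc (t-ε) t) (fun z => (t-z)/ε) y := by
  by_cases h1 : y ≤ t - ε
  · rw [hfunCC_eq_one hε h1,
      indicator_of_mem (show y ∈ Iic (t-ε) from mem_Iic.mpr h1),
      indicator_of_notMem (show y ∉ Ioc (t-ε) t from fun hy => absurd hy.1 (not_lt.mpr h1))]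
    simp
  · push_neg at h1
    by_cases h2 : y ≤ t
    · rw [hfunCC_eq_mid hε h1.le h2,
        indicator_of_notMem (show y ∉ Iic (t-ε) from fun hy => absurd (mem_Iic.mp hy) h1.not_ge),
        indicator_of_mem (show y ∈ Ioc (t-ε) t from mem_Ioc.mpr ⟨h1, h2⟩)]
      ring
    · push_neg at h2
      rw [hfunCC_eq_zero hε h2.le,
        indicator_of_notMem (show y ∉ Iic (t-ε) from fun hy => by
          have := mem_Iic.mp hy; linarith),
        indicator_of_notMem (show y ∉ Ioc (t-ε) t from fun hy => absurd hy.2 h2.not_ge)]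
      ring

lemma hfunCC_decomp_down {ε : ℝ} (hε : 0 < ε) (t y : ℝ) :
    indicator (Iic t) (1 : ℝ → ℝ) y = hfunCC ε t y
      + indicator (Ioc (t-ε) t) (fun z => (z-(t-ε))/ε) y := by
  by_cases h1 : y ≤ t - ε
  · rw [indicator_of_mem (show y ∈ Iic t from mem_Iic.mpr (by linarith)),
      hfunCC_eq_one hε h1,
      indicator_of_notMem (show y ∉ Ioc (t-ε) t from fun hy => absurd hy.1 (not_lt.mpr h1))]
    simp
  · push_neg at h1
    by_cases h2 : y ≤ t
    · rw [indicator_of_mem (show y ∈ Iic t from mem_Iic.mpr h2),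
        hfunCC_eq_mid hε h1.le h2,
        indicator_of_mem (show y ∈ Ioc (t-ε) t from mem_Ioc.mpr ⟨h1, h2⟩)]
      simp only [Pi.one_apply]
      field_simp
      ring
    · push_neg at h2
      rw [indicator_of_notMem (show y ∉ Iic t from fun hy => absurd (mem_Iic.mp hy) h2.not_ge),
        hfunCC_eq_zero hε h2.le,
        indicator_of_notMem (show y ∉ Ioc (t-ε) t from fun hy => absurd hy.2 h2.not_ge)]
      ring

/-! ### Integral computations -/

lemma intCC_up {ε : ℝ} (hε : 0 < ε) (t : ℝ) :
    ∫ y, indicator (Ioc (t-ε) t) (fun z => (t-z)/ε) y = ε/2 := by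
  rw [integral_indicator measurableSet_Ioc,
    ← intervalIntegral.integral_of_le (by linarith : t - ε ≤ t)]
  have h1 : ∫ z in (t-ε)..t, (t - z) = ε^2/2 := by
    rw [intervalIntegral.integral_sub intervalIntegrable_const
        intervalIntegral.intervalIntegrable_id,
      intervalIntegral.integral_const, integral_id]
    simp only [smul_eq_mul]
    ring
  rw [intervalIntegral.integral_div, h1]
  field_simp

lemma intCC_down {ε : ℝ} (hε : 0 < ε) (t : ℝ) :
    ∫ y, indicator (Ioc (t-ε) t) (fun z => (z-(t-ε))/ε) y = ε/2 := by
  rw [integral_indicator measurableSet_Ioc,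
    ← intervalIntegral.integral_of_le (by linarith : t - ε ≤ t)]
  have h1 : ∫ z in (t-ε)..t, (z - (t-ε)) = ε^2/2 := by
    rw [intervalIntegral.integral_sub intervalIntegral.intervalIntegrable_id
        intervalIntegrable_const,
      intervalIntegral.integral_const, integral_id]
    simp only [smul_eq_mul]
    ring
  rw [intervalIntegral.integral_div, h1]
  field_simp

lemma measCC_le {C : ℝ} {f : ℝ → ℝ} (hfC : ∀ y, f y ≤ C) :
    volume.withDensity (fun y => ENNReal.ofReal (f y)) ≤ ENNReal.ofReal C • volume := by
  refine Measure.le_iff.mpr fun s hs => ?_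
  rw [withDensity_apply _ hs, Measure.smul_apply, smul_eq_mul]
  calc ∫⁻ y in s, ENNReal.ofReal (f y) ≤ ∫⁻ _ in s, ENNReal.ofReal C :=
        lintegral_mono fun y => ENNReal.ofReal_le_ofReal (hfC y)
    _ = ENNReal.ofReal C * volume s := by rw [setLIntegral_const]

lemma intCC_le_smul {μ : Measure ℝ} [IsFiniteMeasure μ] {C : ℝ} (hC : 0 ≤ C)
    (hle : μ ≤ ENNReal.ofReal C • volume) {φ : ℝ → ℝ} (hφm : Measurable φ)
    (hφ0 : ∀ y, 0 ≤ φ y) (hφv : Integrable φ volume) :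
    ∫ y, φ y ∂μ ≤ C * ∫ y, φ y := by
  rw [integral_eq_lintegral_of_nonneg_ae (ae_of_all _ hφ0) hφm.aestronglyMeasurable]
  have h1 : ∫⁻ y, ENNReal.ofReal (φ y) ∂μ
      ≤ ENNReal.ofReal C * ∫⁻ y, ENNReal.ofReal (φ y) := by
    calc ∫⁻ y, ENNReal.ofReal (φ y) ∂μ
        ≤ ∫⁻ y, ENNReal.ofReal (φ y) ∂(ENNReal.ofReal C • volume) :=
          lintegral_mono' hle le_rfl
      _ = ENNReal.ofReal C * ∫⁻ y, ENNReal.ofReal (φ y) := lintegral_smul_measure _ _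
  rw [← ofReal_integral_eq_lintegral_ofReal hφv (ae_of_all _ hφ0), ← ENNReal.ofReal_mul hC] at h1
  have h2 : (∫⁻ y, ENNReal.ofReal (φ y) ∂μ).toReal ≤ C * ∫ y, φ y := by
    refine (ENNReal.toReal_le_toReal (ne_top_of_le_ne_top ENNReal.ofReal_ne_top h1)
      ENNReal.ofReal_ne_top).mpr h1 |>.trans ?_
    rw [ENNReal.toReal_ofReal (mul_nonneg hC (integral_nonneg hφ0))]
  exact h2

/-! ### Kantorovich bound for 1-Lipschitz tests -/

lemma kantCC_bound {X : Type*} [MeasurableSpace X] [MetricSpace X] [CompactSpace X]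
    [OpensMeasurableSpace X]
    (P Q : Measure X) [IsProbabilityMeasure P] [IsProbabilityMeasure Q]
    {g : X → ℝ} (hg : LipschitzWith 1 g) :
    |∫ x, g x ∂P - ∫ x, g x ∂Q| ≤ kantorovich P Q := by
  have hne : Nonempty X := by
    by_contra h
    rw [not_nonempty_iff] at h
    have h1 : P univ = 1 := measure_univ
    rw [Set.univ_eq_empty_iff.mpr h, measure_empty] at h1
    simp at h1
  obtain ⟨x₀⟩ := hne
  set M := Metric.diam (Set.univ : Set X) with hM
  have key : ∀ (μ : Measure X), IsProbabilityMeasure μ → ∀ g' : X → ℝ, LipschitzWith 1 g' →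
      |(∫ x, g' x ∂μ) - g' x₀| ≤ M := by
    intro μ hμ g' hg'
    have hbd : ∀ x, ‖g' x - g' x₀‖ ≤ M := by
      intro x
      rw [Real.norm_eq_abs, ← Real.dist_eq]
      calc dist (g' x) (g' x₀) ≤ 1 * dist x x₀ := hg'.dist_le_mul x x₀
        _ = dist x x₀ := one_mul _
        _ ≤ M := Metric.dist_le_diam_of_mem isCompact_univ.isBounded (mem_univ _) (mem_univ _)
    have hmeas : AEStronglyMeasurable g' μ := hg'.continuous.aestronglyMeasurable
    have hint : Integrable g' μ := by
      refine Integrable.mono' (integrable_const (‖g' x₀‖ + M)) hmeas (ae_of_all _ fun x => ?_)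
      have h3 := hbd x
      have h2 := abs_sub_abs_le_abs_sub (g' x) (g' x₀)
      simp only [Real.norm_eq_abs] at h3 ⊢
      linarith
    have h3 : (∫ x, g' x ∂μ) - g' x₀ = ∫ x, (g' x - g' x₀) ∂μ := by
      rw [integral_sub hint (integrable_const _), integral_const]
      simp [measure_univ]
    rw [h3, ← Real.norm_eq_abs]
    calc ‖∫ x, (g' x - g' x₀) ∂μ‖ ≤ M * (μ univ).toReal :=
        norm_integral_le_of_norm_le_const (ae_of_all _ hbd)
      _ = M := by simp [measure_univ]
  have hbdd : BddAbove {r | ∃ g : X → ℝ, LipschitzWith 1 g ∧ r = |∫ x, g x ∂P - ∫ x, g x ∂Q|} := by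
    refine ⟨M + M, ?_⟩
    rintro r ⟨g', hg', rfl⟩
    have h1 := key P inferInstance g' hg'
    have h2 := key Q inferInstance g' hg'
    calc |∫ x, g' x ∂P - ∫ x, g' x ∂Q|
        = |((∫ x, g' x ∂P) - g' x₀) - ((∫ x, g' x ∂Q) - g' x₀)| := by ring_nf
      _ ≤ |(∫ x, g' x ∂P) - g' x₀| + |(∫ x, g' x ∂Q) - g' x₀| := abs_sub _ _
      _ ≤ M + M := add_le_add h1 h2
  exact le_csSup hbdd ⟨g, hg, rfl⟩

/-! ### The per-ε estimate -/

lemma stepCC {d : ℕ}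
    (Ξ : Set (EuclideanSpace ℝ (Fin d))) (hΞ : IsCompact Ξ)
    (P Q : Measure Ξ) [IsProbabilityMeasure P] [IsProbabilityMeasure Q]
    (δ : ℝ) (hδ : 0 ≤ δ) (hρ : kantorovich P Q ≤ δ)
    (G : Ξ → ℝ) (κG : NNReal) (hκG : 0 < κG) (hG : LipschitzWith κG G)
    (C : ℝ) (hC : 0 < C)
    (f : ℝ → ℝ) (hf : P.map G = MeasureTheory.volume.withDensity
      (fun y => ENNReal.ofReal (f y)))
    (hfC : ∀ y, f y ≤ C) (ε : ℝ) (hε : 0 < ε) :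
    |(P {x | G x ≤ 0}).toReal - (Q {x | G x ≤ 0}).toReal| ≤ C * ε / 2 + κG * δ / ε := by
  haveI : CompactSpace Ξ := isCompact_iff_compactSpace.mp hΞ
  have hκ : (0:ℝ) < κG := by exact_mod_cast hκG
  have hGm : Measurable G := hG.continuous.measurable
  haveI hPm : IsProbabilityMeasure (P.map G) := Measure.isProbabilityMeasure_map hGm.aemeasurable
  haveI hQm : IsProbabilityMeasure (Q.map G) := Measure.isProbabilityMeasure_map hGm.aemeasurable
  have hμle : P.map G ≤ ENNReal.ofReal C • volume := by rw [hf]; exact measCC_le hfC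
  have hPset : P {x | G x ≤ 0} = (P.map G) (Iic 0) := by
    rw [Measure.map_apply hGm measurableSet_Iic]; rfl
  have hQset : Q {x | G x ≤ 0} = (Q.map G) (Iic 0) := by
    rw [Measure.map_apply hGm measurableSet_Iic]; rfl
  -- Kantorovich estimate for the smoothed indicator
  have hK : ∀ t : ℝ, |(∫ y, hfunCC ε t y ∂(P.map G)) - ∫ y, hfunCC ε t y ∂(Q.map G)|
      ≤ κG * δ / ε := by
    intro t
    have hεκ : (0:ℝ) < ε / κG := div_pos hε hκ
    have hLip : LipschitzWith 1 (fun x => (ε / κG) * hfunCC ε t (G x)) := by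
      apply LipschitzWith.of_dist_le_mul
      intro x y
      rw [NNReal.coe_one, one_mul, Real.dist_eq]
      calc |(ε / κG) * hfunCC ε t (G x) - (ε / κG) * hfunCC ε t (G y)|
          = (ε/κG) * |hfunCC ε t (G x) - hfunCC ε t (G y)| := by
            rw [← mul_sub, abs_mul, abs_of_pos hεκ]
        _ ≤ (ε/κG) * ((1/ε) * |G x - G y|) :=
            mul_le_mul_of_nonneg_left (hfunCC_lip hε t _ _) hεκ.le
        _ = (1/κG) * |G x - G y| := by field_simp
        _ = (1/κG) * dist (G x) (G y) := by rw [Real.dist_eq]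
        _ ≤ (1/κG) * (κG * dist x y) := by
            refine mul_le_mul_of_nonneg_left (hG.dist_le_mul x y) ?_
            positivity
        _ = dist x y := by field_simp
    have h1 := (kantCC_bound P Q hLip).trans hρ
    have h2 : ∀ (R : Measure Ξ), IsProbabilityMeasure R →
        integral R (fun x => (ε / κG) * hfunCC ε t (G x))
          = (ε/κG) * ∫ y, hfunCC ε t y ∂(R.map G) := by
      intro R _
      rw [integral_map hGm.aemeasurable (hfunCC_continuous ε t).aestronglyMeasurable]
      exact integral_const_mul _ _
    rw [h2 P inferInstance, h2 Q inferInstance, ← mul_sub, abs_mul, abs_of_pos hεκ] at h1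
    calc |(∫ y, hfunCC ε t y ∂(P.map G)) - ∫ y, hfunCC ε t y ∂(Q.map G)|
        = ((ε/κG) * |(∫ y, hfunCC ε t y ∂(P.map G)) - ∫ y, hfunCC ε t y ∂(Q.map G)|) / (ε/κG) := by
          field_simp
      _ ≤ δ / (ε/κG) := (div_le_div_iff_of_pos_right hεκ).mpr h1
      _ = κG * δ / ε := by
          field_simp
  -- integrability facts
  have hfunInt : ∀ (t : ℝ) (m : Measure ℝ), IsFiniteMeasure m → Integrable (hfunCC ε t) m := by
    intro t m _
    refine Integrable.mono' (integrable_const 1)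
      (hfunCC_continuous ε t).measurable.aestronglyMeasurable (ae_of_all _ fun y => ?_)
    rw [Real.norm_eq_abs, abs_of_nonneg (hfunCC_nonneg _ _ _)]
    exact hfunCC_le_one _ _ _
  have hIndInt : ∀ (c : ℝ) (m : Measure ℝ), IsFiniteMeasure m →
      Integrable (indicator (Iic c) (1:ℝ→ℝ)) m :=
    fun c m _ => (integrable_const 1).indicator measurableSet_Iic
  have hIndMeas : ∀ (a b : ℝ) (g : ℝ → ℝ), Continuous g →
      Measurable (indicator (Ioc a b) g) :=
    fun a b g hg => hg.measurable.indicator measurableSet_Ioc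
  have hIndIntFin : ∀ (a b : ℝ) (g : ℝ → ℝ), Continuous g → (∀ y ∈ Ioc a b, |g y| ≤ 1) →
      ∀ (m : Measure ℝ), IsFiniteMeasure m → Integrable (indicator (Ioc a b) g) m := by
    intro a b g hg hg1 m _
    refine Integrable.mono' (integrable_const 1)
      (hIndMeas a b g hg).aestronglyMeasurable (ae_of_all _ fun y => ?_)
    rw [Real.norm_eq_abs]
    by_cases hy : y ∈ Ioc a b
    · rw [indicator_of_mem hy]; exact hg1 y hy
    · rw [indicator_of_notMem hy]; simp
  have hIndIntVol : ∀ (a b : ℝ) (g : ℝ → ℝ), Continuous g →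
      Integrable (indicator (Ioc a b) g) volume :=
    fun a b g hg => (integrable_indicator_iff measurableSet_Ioc).mpr (hg.integrableOn_Ioc)
  -- Direction 1 : Q-side minus P-side, using t = ε
  have dir1 : (Q {x | G x ≤ 0}).toReal
      ≤ (P {x | G x ≤ 0}).toReal + (C * ε / 2 + ↑κG * δ / ε) := by
    set g : ℝ → ℝ := fun z => (ε - z)/ε with hgdef
    have hgc : Continuous g := (continuous_const.sub continuous_id).div_const ε
    have hg1 : ∀ y ∈ Ioc (0:ℝ) ε, |g y| ≤ 1 := by
      intro y hy
      rw [hgdef, abs_of_nonneg (div_nonneg (by linarith [hy.2]) hε.le)]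
      exact (div_le_one hε).mpr (by linarith [hy.1])
    have hg0 : ∀ y ∈ Ioc (0:ℝ) ε, 0 ≤ g y := fun y hy =>
      div_nonneg (by linarith [hy.2]) hε.le
    have hdecomp : ∀ y, hfunCC ε ε y = indicator (Iic 0) 1 y + indicator (Ioc 0 ε) g y := by
      intro y
      have h := hfunCC_decomp_up hε ε y
      rwa [sub_self] at h
    have hvol : ∫ y, indicator (Ioc 0 ε) g y = ε/2 := by
      have h := intCC_up hε ε
      rwa [sub_self] at h
    have hPdec : ∫ y, hfunCC ε ε y ∂(P.map G)
        = (P {x | G x ≤ 0}).toReal + ∫ y, indicator (Ioc 0 ε) g y ∂(P.map G) := by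
      rw [integral_congr_ae (ae_of_all _ hdecomp),
        integral_add (hIndInt 0 _ inferInstance) (hIndIntFin 0 ε g hgc hg1 _ inferInstance),
        integral_indicator_one measurableSet_Iic, hPset, measureReal_def]
    have hQdec : ∫ y, hfunCC ε ε y ∂(Q.map G)
        = (Q {x | G x ≤ 0}).toReal + ∫ y, indicator (Ioc 0 ε) g y ∂(Q.map G) := by
      rw [integral_congr_ae (ae_of_all _ hdecomp),
        integral_add (hIndInt 0 _ inferInstance) (hIndIntFin 0 ε g hgc hg1 _ inferInstance),
        integral_indicator_one measurableSet_Iic, hQset, measureReal_def]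
    have hPbd : ∫ y, indicator (Ioc 0 ε) g y ∂(P.map G) ≤ C * (ε/2) := by
      have h := intCC_le_smul hC.le hμle (hIndMeas 0 ε g hgc)
        (fun y => indicator_nonneg hg0 y) (hIndIntVol 0 ε g hgc)
      rwa [hvol] at h
    have hQbd : 0 ≤ ∫ y, indicator (Ioc 0 ε) g y ∂(Q.map G) :=
      integral_nonneg fun y => indicator_nonneg hg0 y
    have hKε := hK ε
    have habs : ∫ y, hfunCC ε ε y ∂(Q.map G)
        ≤ ∫ y, hfunCC ε ε y ∂(P.map G) + ↑κG * δ / ε := by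
      have := abs_le.mp hKε
      linarith [this.1]
    calc (Q {x | G x ≤ 0}).toReal
        ≤ (Q {x | G x ≤ 0}).toReal + ∫ y, indicator (Ioc 0 ε) g y ∂(Q.map G) := by linarith
      _ = ∫ y, hfunCC ε ε y ∂(Q.map G) := hQdec.symm
      _ ≤ ∫ y, hfunCC ε ε y ∂(P.map G) + ↑κG * δ / ε := habs
      _ = (P {x | G x ≤ 0}).toReal + ∫ y, indicator (Ioc 0 ε) g y ∂(P.map G)
            + ↑κG * δ / ε := by rw [hPdec]
      _ ≤ (P {x | G x ≤ 0}).toReal + (C * ε / 2 + ↑κG * δ / ε) := by linarith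
  -- Direction 2 : P-side minus Q-side, using t = 0
  have dir2 : (P {x | G x ≤ 0}).toReal
      ≤ (Q {x | G x ≤ 0}).toReal + (C * ε / 2 + ↑κG * δ / ε) := by
    set g : ℝ → ℝ := fun z => (z - (0 - ε))/ε with hgdef
    have hgc : Continuous g := (continuous_id.sub continuous_const).div_const ε
    have hg1 : ∀ y ∈ Ioc (0-ε) (0:ℝ), |g y| ≤ 1 := by
      intro y hy
      rw [hgdef, abs_of_nonneg (div_nonneg (by linarith [hy.1]) hε.le)]
      exact (div_le_one hε).mpr (by linarith [hy.2])
    have hg0 : ∀ y ∈ Ioc (0-ε) (0:ℝ), 0 ≤ g y := fun y hy =>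
      div_nonneg (by linarith [hy.1]) hε.le
    have hdecomp : ∀ y, indicator (Iic 0) (1:ℝ→ℝ) y
        = hfunCC ε 0 y + indicator (Ioc (0-ε) 0) g y :=
      fun y => hfunCC_decomp_down hε 0 y
    have hvol : ∫ y, indicator (Ioc (0-ε) 0) g y = ε/2 := intCC_down hε 0
    have hPdec : (P {x | G x ≤ 0}).toReal
        = ∫ y, hfunCC ε 0 y ∂(P.map G) + ∫ y, indicator (Ioc (0-ε) 0) g y ∂(P.map G) := by
      rw [hPset, ← measureReal_def, ← integral_indicator_one measurableSet_Iic,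
        integral_congr_ae (ae_of_all _ hdecomp),
        integral_add (hfunInt 0 _ inferInstance) (hIndIntFin (0-ε) 0 g hgc hg1 _ inferInstance)]
    have hQdec : (Q {x | G x ≤ 0}).toReal
        = ∫ y, hfunCC ε 0 y ∂(Q.map G) + ∫ y, indicator (Ioc (0-ε) 0) g y ∂(Q.map G) := by
      rw [hQset, ← measureReal_def, ← integral_indicator_one measurableSet_Iic,
        integral_congr_ae (ae_of_all _ hdecomp),
        integral_add (hfunInt 0 _ inferInstance) (hIndIntFin (0-ε) 0 g hgc hg1 _ inferInstance)]
    have hPbd : ∫ y, indicator (Ioc (0-ε) 0) g y ∂(P.map G) ≤ C * (ε/2) := by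
      have h := intCC_le_smul hC.le hμle (hIndMeas (0-ε) 0 g hgc)
        (fun y => indicator_nonneg hg0 y) (hIndIntVol (0-ε) 0 g hgc)
      rwa [hvol] at h
    have hQbd : 0 ≤ ∫ y, indicator (Ioc (0-ε) 0) g y ∂(Q.map G) :=
      integral_nonneg fun y => indicator_nonneg hg0 y
    have hK0 := hK 0
    have habs : ∫ y, hfunCC ε 0 y ∂(P.map G)
        ≤ ∫ y, hfunCC ε 0 y ∂(Q.map G) + ↑κG * δ / ε := by
      have := abs_le.mp hK0
      linarith [this.2]
    calc (P {x | G x ≤ 0}).toReal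
        = ∫ y, hfunCC ε 0 y ∂(P.map G) + ∫ y, indicator (Ioc (0-ε) 0) g y ∂(P.map G) := hPdec
      _ ≤ ∫ y, hfunCC ε 0 y ∂(P.map G) + C * (ε/2) := by linarith
      _ ≤ ∫ y, hfunCC ε 0 y ∂(Q.map G) + ↑κG * δ / ε + C * (ε/2) := by linarith
      _ ≤ (Q {x | G x ≤ 0}).toReal + (C * ε / 2 + ↑κG * δ / ε) := by
          have : ∫ y, hfunCC ε 0 y ∂(Q.map G) ≤ (Q {x | G x ≤ 0}).toReal := by
            rw [hQdec]; linarith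
          linarith
  rw [abs_sub_le_iff]
  constructor <;> linarith

theorem chance_constraint_probability_gap {d : ℕ}
    (Ξ : Set (EuclideanSpace ℝ (Fin d))) (hΞ : IsCompact Ξ)
    (P Q : Measure Ξ) [IsProbabilityMeasure P] [IsProbabilityMeasure Q]
    (δ : ℝ) (hδ : 0 ≤ δ) (hρ : kantorovich P Q ≤ δ)
    (G : Ξ → ℝ) (κG : NNReal) (hκG : 0 < κG) (hG : LipschitzWith κG G)
    (C : ℝ) (hC : 0 < C)
    (f : ℝ → ℝ) (hf : P.map G = MeasureTheory.volume.withDensity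
      (fun y => ENNReal.ofReal (f y)))
    (hfC : ∀ y, f y ≤ C) :
    |(P {x | G x ≤ 0}).toReal - (Q {x | G x ≤ 0}).toReal| ≤
      Real.sqrt (2 * (κG : ℝ) * C * δ) := by
  have hκ : (0:ℝ) < κG := by exact_mod_cast hκG
  have main : ∀ ε : ℝ, 0 < ε →
      |(P {x | G x ≤ 0}).toReal - (Q {x | G x ≤ 0}).toReal| ≤ C * ε / 2 + ↑κG * δ / ε :=
    fun ε hε => stepCC Ξ hΞ P Q δ hδ hρ G κG hκG hG C hC f hf hfC ε hε
  rcases eq_or_lt_of_le hδ with hδ0 | hδpos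
  · -- δ = 0
    have h0 : |(P {x | G x ≤ 0}).toReal - (Q {x | G x ≤ 0}).toReal| ≤ 0 := by
      refine le_of_forall_pos_le_add fun η hη => ?_
      have h := main (2*η/C) (by positivity)
      have e1 : C * (2*η/C) / 2 = η := by field_simp
      have e2 : ↑κG * δ / (2*η/C) = 0 := by rw [← hδ0]; simp
      rw [e1, e2] at h
      linarith
    exact h0.trans (Real.sqrt_nonneg _)
  · set s := Real.sqrt (2 * (κG : ℝ) * C * δ) with hs
    have hsq : s^2 = 2 * (κG : ℝ) * C * δ := Real.sq_sqrt (by positivity)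
    have hs0 : 0 < s := Real.sqrt_pos.mpr (by positivity)
    have h := main (s / C) (by positivity)
    have e1 : C * (s/C) / 2 = s/2 := by field_simp
    have e2 : ↑κG * δ / (s/C) = s/2 := by
      rw [div_div_eq_mul_div, div_eq_div_iff hs0.ne' two_ne_zero]
      nlinarith [hsq]
    rw [e1, e2] at h
    linarith
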